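/- For n = 2, every non-extensible cube packing of the discrete torus (ℤ/4ℤ)^2 is a tiling, i.e., consists of exactly 4 pairwise disjoint cubes covering the torus. -/
import Mathlib


/-- The cube `v + {0,1}^n` in the discrete torus `(ℤ/4ℤ)^n`. -/
def cube {n : ℕ} (v : Fin n → ZMod 4) : Set (Fin n → ZMod 4) :=
  {x | ∀ i, x i = v i ∨ x i = v i + 1}

/-- Decidable disjointness condition: some coordinate differs by 2. -/
def D (v w : Fin 2 → ZMod 4) : Prop := w 0 = v 0 + 2 ∨ w 1 = v 1 + 2

instance (v w : Fin 2 → ZMod 4) : Decidable (D v w) := by unfold D; infer_instance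

lemma zmod4_helper (a b : ZMod 4) (h : b ≠ a + 2) :
    ((if b = a + 3 then a else b) = a ∨ (if b = a + 3 then a else b) = a + 1) ∧
    ((if b = a + 3 then a else b) = b ∨ (if b = a + 3 then a else b) = b + 1) := by
  revert a b; decide

lemma disj_iff (v w : Fin 2 → ZMod 4) : Disjoint (cube v) (cube w) ↔ D v w := by
  constructor
  · intro h
    by_contra hc
    unfold D at hc
    push_neg at hc
    have hc' : ∀ i : Fin 2, w i ≠ v i + 2 := by
      intro i; fin_cases i
      · exact hc.1
      · exact hc.2
    set x : Fin 2 → ZMod 4 := fun i => if w i = v i + 3 then v i else w i with hx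
    have hxv : x ∈ cube v := fun i => (zmod4_helper (v i) (w i) (hc' i)).1
    have hxw : x ∈ cube w := fun i => (zmod4_helper (v i) (w i) (hc' i)).2
    exact Set.disjoint_left.mp h hxv hxw
  · intro hd
    have ⟨i, hi⟩ : ∃ i : Fin 2, w i = v i + 2 := by
      rcases hd with h | h
      · exact ⟨0, h⟩
      · exact ⟨1, h⟩
    rw [Set.disjoint_left]
    intro x hxv hxw
    have h1 := hxv i
    have h2 := hxw i
    rw [hi] at h2
    have : ∀ a c : ZMod 4, (c = a ∨ c = a + 1) → (c = a + 2 ∨ c = a + 2 + 1) → False := by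
      decide
    exact this (v i) (x i) h1 h2

set_option synthInstance.maxHeartbeats 1000000 in
set_option synthInstance.maxSize 2000 in
set_option maxHeartbeats 4000000 in
lemma key : ∀ v1 v2 v3 : Fin 2 → ZMod 4,
    (v1 = v2 ∨ D v1 v2) → (v1 = v3 ∨ D v1 v3) → (v2 = v3 ∨ D v2 v3) →
    ∃ w, D v1 w ∧ D v2 w ∧ D v3 w := by decide

lemma exists3 {α : Type*} [DecidableEq α] (s : Finset α) (h : s.card ≤ 3) (a0 : α) :
    ∃ a b c, ∀ x ∈ s, x = a ∨ x = b ∨ x = c := by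
  have hlen := s.length_toList
  have hmem : ∀ x, x ∈ s ↔ x ∈ s.toList := fun x => (Finset.mem_toList).symm
  rcases hl : s.toList with _ | ⟨a, _ | ⟨b, _ | ⟨c, _ | d⟩⟩⟩
  · exact ⟨a0, a0, a0, fun x hx => by simp [hmem, hl] at hx⟩
  · exact ⟨a, a, a, fun x hx => by simp [hmem, hl] at hx; tauto⟩
  · exact ⟨a, b, b, fun x hx => by simp [hmem, hl] at hx; tauto⟩
  · exact ⟨a, b, c, fun x hx => by simp [hmem, hl] at hx; tauto⟩
  · rw [hl] at hlen; simp at hlen; omega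

/-- Finset version of the cube. -/
def cubeF (v : Fin 2 → ZMod 4) : Finset (Fin 2 → ZMod 4) :=
  Finset.univ.filter fun x => ∀ i, x i = v i ∨ x i = v i + 1

lemma mem_cubeF (v x : Fin 2 → ZMod 4) : x ∈ cubeF v ↔ x ∈ cube v := by
  simp [cubeF, cube]

lemma card_cubeF : ∀ v : Fin 2 → ZMod 4, (cubeF v).card = 4 := by decide

theorem dim2_nonextensible_is_tiling (P : Finset (Fin 2 → ZMod 4))
    (hP : (P : Set (Fin 2 → ZMod 4)).Pairwise fun v w => Disjoint (cube v) (cube w))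
    (hmax : ∀ w : Fin 2 → ZMod 4, ¬ ∀ v ∈ P, Disjoint (cube v) (cube w)) :
    P.card = 4 ∧ (⋃ v ∈ P, cube v) = Set.univ := by
  -- P is nonempty
  obtain ⟨a0, ha0⟩ : P.Nonempty := by
    rcases P.eq_empty_or_nonempty with rfl | h
    · exact absurd (fun v hv => absurd hv (by simp)) (hmax fun _ => 0)
    · exact h
  -- P has at least 4 elements
  have hge : 4 ≤ P.card := by
    by_contra hlt
    push_neg at hlt
    obtain ⟨a, b, c, habc⟩ := exists3 P (by omega) a0
    -- replace a, b, c by representatives inside P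
    set a' : Fin 2 → ZMod 4 := if a ∈ P then a else a0 with ha'
    set b' : Fin 2 → ZMod 4 := if b ∈ P then b else a0 with hb'
    set c' : Fin 2 → ZMod 4 := if c ∈ P then c else a0 with hc'
    have hma : a' ∈ P := by rw [ha']; split <;> [assumption; exact ha0]
    have hmb : b' ∈ P := by rw [hb']; split <;> [assumption; exact ha0]
    have hmc : c' ∈ P := by rw [hc']; split <;> [assumption; exact ha0]
    have hcov : ∀ x ∈ P, x = a' ∨ x = b' ∨ x = c' := by
      intro x hx
      rcases habc x hx with rfl | rfl | rfl
      · exact Or.inl (by rw [ha', if_pos hx])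
      · exact Or.inr (Or.inl (by rw [hb', if_pos hx]))
      · exact Or.inr (Or.inr (by rw [hc', if_pos hx]))
    have hpair : ∀ x ∈ P, ∀ y ∈ P, x = y ∨ D x y := by
      intro x hx y hy
      rcases eq_or_ne x y with h | h
      · exact Or.inl h
      · exact Or.inr ((disj_iff x y).mp (hP hx hy h))
    obtain ⟨w, hw1, hw2, hw3⟩ := key a' b' c' (hpair a' hma b' hmb) (hpair a' hma c' hmc)
      (hpair b' hmb c' hmc)
    refine hmax w fun v hv => (disj_iff v w).mpr ?_
    rcases hcov v hv with rfl | rfl | rfl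
    exacts [hw1, hw2, hw3]
  -- counting: card ≤ 4
  have hdisjF : ∀ v ∈ P, ∀ w ∈ P, v ≠ w → Disjoint (cubeF v) (cubeF w) := by
    intro v hv w hw hne
    have hd := hP hv hw hne
    rw [Finset.disjoint_left]
    intro x hx hx'
    exact Set.disjoint_left.mp hd ((mem_cubeF v x).mp hx) ((mem_cubeF w x).mp hx')
  have hb : (P.biUnion cubeF).card = P.card * 4 := by
    rw [Finset.card_biUnion hdisjF]
    simp [card_cubeF, Finset.sum_const]
  have h16 : Fintype.card (Fin 2 → ZMod 4) = 16 := by simp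
  have hle : (P.biUnion cubeF).card ≤ 16 :=
    (Finset.card_le_univ _).trans_eq h16
  have hcard : P.card = 4 := by omega
  refine ⟨hcard, ?_⟩
  have huniv : P.biUnion cubeF = Finset.univ := by
    apply Finset.eq_univ_of_card
    rw [hb, hcard, h16]
  ext x
  simp only [Set.mem_iUnion, Set.mem_univ, iff_true]
  have : x ∈ P.biUnion cubeF := huniv ▸ Finset.mem_univ x
  obtain ⟨v, hv, hxv⟩ := Finset.mem_biUnion.mp this
  exact ⟨v, hv, (mem_cubeF v x).mp hxv⟩
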